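/- Quasi-reductivity implies quasi-decreasingness: if an oriented 3-CTRS R is quasi-reductive with respect to a reduction order ≻, then R is quasi-decreasing with respect to the order ≻_st = (≻ ∪ ⊳)⁺, i.e., ≻_st is well-founded, contains the rewrite relation →_R, satisfies (≻_st ∪ ⊳)⁺ = ≻_st, and for every rule ℓ → r ⇐ s₁ ≈ t₁, …, sₙ ≈ tₙ in R, every substitution σ, and every 0 ≤ i < n, if sⱼσ →_R* tⱼσ for all 1 ≤ j ≤ i, then ℓσ ≻_st s_{i+1}σ. -/

import Mathlib

/-- First-order terms over signature `F` with variables `V`. -/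
inductive Term (F V : Type) : Type where
  | var : V → Term F V
  | app : F → List (Term F V) → Term F V

namespace Term

variable {F V : Type}

mutual
/-- Application of a substitution to a term. -/
def subst (σ : V → Term F V) : Term F V → Term F V
  | .var x => σ x
  | .app f ts => .app f (substList σ ts)

/-- Application of a substitution to a list of terms. -/
def substList (σ : V → Term F V) : List (Term F V) → List (Term F V)
  | [] => []
  | t :: ts => t.subst σ :: substList σ ts
end

/-- `t.HasVar x` means the variable `x` occurs in `t`. -/
inductive HasVar : Term F V → V → Prop where
  | var : ∀ x, HasVar (.var x) x
  | app : ∀ {f ts t x}, t ∈ ts → HasVar t x → HasVar (.app f ts) x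

/-- `DirectSubterm t s`: `t` is an immediate subterm (argument) of `s`. -/
def DirectSubterm (t s : Term F V) : Prop :=
  ∃ f ts, s = Term.app f ts ∧ t ∈ ts

/-- `ProperSubterm t s`: `t` is a proper subterm of `s` (so `s ⊳ t`). -/
def ProperSubterm : Term F V → Term F V → Prop :=
  Relation.TransGen DirectSubterm

/-- Reflexive subterm relation: `Subterm t s` iff `s ⊵ t`. -/
def Subterm : Term F V → Term F V → Prop :=
  Relation.ReflTransGen DirectSubterm

/-- Subterm of `t` at position `p`, if any. -/
def subtermAt : Term F V → List ℕ → Option (Term F V)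
  | t, [] => some t
  | .var _, _ :: _ => none
  | .app _ ts, i :: p =>
    match ts[i]? with
    | some t => t.subtermAt p
    | none => none

/-- Replace the subterm at position `p` by `u`, if the position exists. -/
def replaceAt : Term F V → List ℕ → Term F V → Option (Term F V)
  | _, [], u => some u
  | .var _, _ :: _, _ => none
  | .app f ts, i :: p, u =>
    match ts[i]? with
    | some t => (t.replaceAt p u).map (fun t' => Term.app f (ts.set i t'))
    | none => none

end Term

/-- A rewrite relation is closed under contexts if it is closed under
placing both sides in the same argument position of a function application. -/
def ClosedUnderCtx {F V : Type} (r : Term F V → Term F V → Prop) : Prop :=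
  ∀ (f : F) (ts₁ ts₂ : List (Term F V)) (s t : Term F V),
    r s t → r (Term.app f (ts₁ ++ s :: ts₂)) (Term.app f (ts₁ ++ t :: ts₂))

/-- Closure under substitutions. -/
def ClosedUnderSubst {F V : Type} (r : Term F V → Term F V → Prop) : Prop :=
  ∀ (s t : Term F V) (σ : V → Term F V), r s t → r (s.subst σ) (t.subst σ)

/-- `a` is a normal form of `r` if it has no `r`-successor. -/
def NormalForm {A : Type} (r : A → A → Prop) (a : A) : Prop :=
  ∀ b, ¬ r a b

/-- A substitution is normalized if it maps every variable to a normal form. -/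
def NormalizedSubst {F V : Type} (r : Term F V → Term F V → Prop)
    (σ : V → Term F V) : Prop :=
  ∀ x, NormalForm r (σ x)

/-- A term is strongly irreducible w.r.t. `r` if all its instances by
normalized substitutions are normal forms. -/
def StronglyIrreducible {F V : Type} (r : Term F V → Term F V → Prop)
    (t : Term F V) : Prop :=
  ∀ σ, NormalizedSubst r σ → NormalForm r (t.subst σ)

/-- Joinability. -/
def Joinable {A : Type} (r : A → A → Prop) (t u : A) : Prop :=
  ∃ v, Relation.ReflTransGen r t v ∧ Relation.ReflTransGen r u v

/-- Confluence. -/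
def Confluent {A : Type} (r : A → A → Prop) : Prop :=
  ∀ s t u, Relation.ReflTransGen r s t → Relation.ReflTransGen r s u →
    Joinable r t u
/-- A conditional rewrite rule `ℓ → r ⇐ s₁ ≈ t₁, …, sₙ ≈ tₙ`. -/
structure CRule (F V : Type) where
  lhs : Term F V
  rhs : Term F V
  conds : List (Term F V × Term F V)

mutual
/-- The conditional rewrite relation of an oriented CTRS: the least relation
closed under contexts such that `ℓσ → rσ` whenever `sᵢσ →* tᵢσ` for all
conditions `sᵢ ≈ tᵢ` of the rule. -/
inductive CondRew {F V : Type} (R : Set (CRule F V)) :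
    Term F V → Term F V → Prop where
  | root (ρ : CRule F V) (σ : V → Term F V) :
      ρ ∈ R →
      (∀ c ∈ ρ.conds, CondRewStar R (c.1.subst σ) (c.2.subst σ)) →
      CondRew R (ρ.lhs.subst σ) (ρ.rhs.subst σ)
  | ctx (f : F) (ts₁ ts₂ : List (Term F V)) (s t : Term F V) :
      CondRew R s t →
      CondRew R (Term.app f (ts₁ ++ s :: ts₂)) (Term.app f (ts₁ ++ t :: ts₂))

/-- Reflexive-transitive closure of the conditional rewrite relation
(mutually defined, used in the conditions of rules). -/
inductive CondRewStar {F V : Type} (R : Set (CRule F V)) :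
    Term F V → Term F V → Prop where
  | refl (t : Term F V) : CondRewStar R t t
  | head {s t u : Term F V} :
      CondRew R s t → CondRewStar R t u → CondRewStar R s u
end

/-- Quasi-reductivity w.r.t. a reduction order `≻` implies
quasi-decreasingness w.r.t. `≻_st = (≻ ∪ ⊳)⁺`. -/
theorem quasiDecreasing_of_quasiReductive {F V : Type}
    (R : Set (CRule F V))
    -- R is an oriented 3-CTRS
    (hlhs : ∀ ρ ∈ R, ¬ ∃ x, ρ.lhs = Term.var x)
    (hvarr : ∀ ρ ∈ R, ∀ x, ρ.rhs.HasVar x →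
      ρ.lhs.HasVar x ∨ ∃ c ∈ ρ.conds, c.1.HasVar x ∨ c.2.HasVar x)
    -- ≻ is a reduction order
    (succ : Term F V → Term F V → Prop)
    (hwf : WellFounded (fun t s => succ s t))
    (htrans : Transitive succ)
    (hirr : Irreflexive succ)
    (hctx : ClosedUnderCtx succ)
    (hsubst : ClosedUnderSubst succ)
    -- the order ≻_st = (≻ ∪ ⊳)⁺
    (succst : Term F V → Term F V → Prop)
    (hst : ∀ s t, succst s t ↔
      Relation.TransGen (fun a b => succ a b ∨ Term.ProperSubterm b a) s t)
    -- quasi-reductivity: (a) and (b)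
    (hqra : ∀ ρ ∈ R, ∀ σ : V → Term F V, ∀ i, ∀ hi : i < ρ.conds.length,
      (∀ j, ∀ hj : j < i,
        succ ((ρ.conds[j]'(hj.trans hi)).1.subst σ)
             ((ρ.conds[j]'(hj.trans hi)).2.subst σ) ∨
        (ρ.conds[j]'(hj.trans hi)).1.subst σ =
          (ρ.conds[j]'(hj.trans hi)).2.subst σ) →
      succst (ρ.lhs.subst σ) ((ρ.conds[i]'hi).1.subst σ))
    (hqrb : ∀ ρ ∈ R, ∀ σ : V → Term F V,
      (∀ j, ∀ hj : j < ρ.conds.length,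
        succ ((ρ.conds[j]'hj).1.subst σ) ((ρ.conds[j]'hj).2.subst σ) ∨
        (ρ.conds[j]'hj).1.subst σ = (ρ.conds[j]'hj).2.subst σ) →
      succ (ρ.lhs.subst σ) (ρ.rhs.subst σ)) :
    -- quasi-decreasingness w.r.t. ≻_st
    WellFounded (fun t s => succst s t) ∧
    (∀ s t, CondRew R s t → succst s t) ∧
    (∀ s t,
      Relation.TransGen (fun a b => succst a b ∨ Term.ProperSubterm b a) s t ↔
      succst s t) ∧
    (∀ ρ ∈ R, ∀ σ : V → Term F V, ∀ i, ∀ hi : i < ρ.conds.length,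
      (∀ j, ∀ hj : j < i,
        Relation.ReflTransGen (CondRew R)
          ((ρ.conds[j]'(hj.trans hi)).1.subst σ)
          ((ρ.conds[j]'(hj.trans hi)).2.subst σ)) →
      succst (ρ.lhs.subst σ) ((ρ.conds[i]'hi).1.subst σ)) := by
  classical
  -- ≻ lifted through the subterm relation
  have lift : ∀ {s t u : Term F V}, Term.Subterm s t → succ s u →
      ∃ t', succ t t' ∧ Term.Subterm u t' := by
    intro s t u hsub
    induction hsub with
    | refl => intro h; exact ⟨u, h, Relation.ReflTransGen.refl⟩
    | tail h1 h2 ih =>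
      intro hsu
      obtain ⟨m', hbm', hum'⟩ := ih hsu
      obtain ⟨f, ts, rfl, hb⟩ := h2
      obtain ⟨ts₁, ts₂, rfl⟩ := List.append_of_mem hb
      refine ⟨Term.app f (ts₁ ++ m' :: ts₂), hctx f ts₁ ts₂ _ _ hbm', ?_⟩
      exact hum'.tail ⟨f, _, rfl, by simp⟩
  -- the direct subterm relation is well-founded
  have hsz : ∀ (t s : Term F V), Term.DirectSubterm t s → sizeOf t < sizeOf s := by
    rintro t s ⟨f, ts, rfl, ht⟩
    have h1 := List.sizeOf_lt_of_mem ht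
    have h2 := Term.app.sizeOf_spec f ts
    omega
  have wfd : WellFounded (fun t s : Term F V => Term.DirectSubterm t s) :=
    Subrelation.wf (fun {a b} h => hsz a b h)
      (InvImage.wf sizeOf Nat.lt_wfRel.wf)
  -- the base relation of ≻_st (inverted)
  set B := fun t s : Term F V => succ s t ∨ Term.DirectSubterm t s with hB
  have main : ∀ s : Term F V, Acc (fun t s => succ s t) s →
      ∀ u, Term.Subterm u s → Acc B u := by
    intro s hacc
    induction hacc with
    | intro s _ ihs =>
      intro u
      induction (wfd.apply u) with
      | intro u _ ihu =>
        intro hus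
        constructor
        intro x hx
        rcases hx with hsucc | hd
        · obtain ⟨s', hss', hxs'⟩ := lift hus hsucc
          exact ihs s' hss' x hxs'
        · exact ihu x hd (Relation.ReflTransGen.head hd hus)
  have wfB : WellFounded B := ⟨fun s => main s (hwf.apply s) s Relation.ReflTransGen.refl⟩
  have wfTB : WellFounded (Relation.TransGen B) := wfB.transGen
  have sub1 : ∀ t s : Term F V, succst s t → Relation.TransGen B t s := by
    intro t s h
    have h' : Relation.TransGen
        (Function.swap (fun a b => succ a b ∨ Term.ProperSubterm b a)) t s :=
      Relation.transGen_swap.mpr ((hst s t).mp h)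
    have emb : ∀ a b : Term F V,
        Function.swap (fun a b => succ a b ∨ Term.ProperSubterm b a) a b →
        Relation.TransGen B a b := by
      intro a b hab
      rcases hab with hs | hp
      · exact Relation.TransGen.single (Or.inl hs)
      · exact Relation.TransGen.mono (fun x y hxy => Or.inr hxy) _ _ hp
    have := Relation.TransGen.mono emb _ _ h'
    rwa [Relation.transGen_idem] at this
  have wfst : WellFounded (fun t s => succst s t) :=
    Subrelation.wf (fun {t s} h => sub1 t s h) wfTB
  -- every rewrite step decreases in ≻
  have key : ∀ s t, CondRew R s t → succ s t := by
    intro s t h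
    refine CondRew.rec (motive_1 := fun a b _ => succ a b)
      (motive_2 := fun a b _ => succ a b ∨ a = b) ?_ ?_ ?_ ?_ h
    · intro ρ σ hρ hconds ih
      apply hqrb ρ hρ σ
      intro j hj
      exact ih _ (List.getElem_mem hj)
    · intro f ts₁ ts₂ a b _ ih
      exact hctx f ts₁ ts₂ a b ih
    · intro t
      exact Or.inr rfl
    · intro a b c h1 h2 ih1 ih2
      rcases ih2 with h | h
      · exact Or.inl (htrans ih1 h)
      · exact Or.inl (h ▸ ih1)
  have starkey : ∀ s t, Relation.ReflTransGen (CondRew R) s t → succ s t ∨ s = t := by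
    intro s t h
    induction h with
    | refl => exact Or.inr rfl
    | tail h1 h2 ih =>
      rcases ih with h | rfl
      · exact Or.inl (htrans h (key _ _ h2))
      · exact Or.inl (key _ _ h2)
  have part2 : ∀ s t, CondRew R s t → succst s t := by
    intro s t h
    exact (hst s t).mpr (Relation.TransGen.single (Or.inl (key s t h)))
  have hsttrans : ∀ a b c : Term F V, succst a b → succst b c → succst a c := by
    intro a b c h1 h2
    exact (hst a c).mpr (((hst a b).mp h1).trans ((hst b c).mp h2))
  have part3 : ∀ s t,
      Relation.TransGen (fun a b => succst a b ∨ Term.ProperSubterm b a) s t ↔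
      succst s t := by
    intro s t
    constructor
    · intro h
      induction h with
      | single hab =>
        rcases hab with h | h
        · exact h
        · exact (hst _ _).mpr (Relation.TransGen.single (Or.inr h))
      | tail h1 hbc ih =>
        rcases hbc with h | h
        · exact hsttrans _ _ _ ih h
        · exact hsttrans _ _ _ ih ((hst _ _).mpr (Relation.TransGen.single (Or.inr h)))
    · intro h
      exact Relation.TransGen.single (Or.inl h)
  refine ⟨wfst, part2, part3, ?_⟩
  intro ρ hρ σ i hi hconds
  apply hqra ρ hρ σ i hi
  intro j hj
  exact starkey _ _ (hconds j hj)
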